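/- Let Ω be a measurable space, let X : Ω → ℝ be measurable, and let μ and ν be probability measures on Ω with respect to both of which X is square-integrable. Fix λ ≥ 0 and define the variance-penalized expectation of a probability measure κ as VPE(κ) = E_κ[X] − λ·Var_κ[X]. Then for every p ∈ [0,1], VPE(p•μ + (1−p)•ν) = p·VPE(μ) + (1−p)·VPE(ν) − λ·p·(1−p)·(E_μ[X] − E_ν[X])², and consequently VPE(p•μ + (1−p)•ν) ≤ max(VPE(μ), VPE(ν)). -/

import Mathlib

open MeasureTheory ProbabilityTheory

/-- The variance-penalized expectation of a mixture of two probability measures: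
exact formula and upper bound by the max of the two VPEs. -/
theorem vpe_mixture {Ω : Type*} [MeasurableSpace Ω] (X : Ω → ℝ)
    (hX : Measurable X) (μ ν : Measure Ω)
    [IsProbabilityMeasure μ] [IsProbabilityMeasure ν]
    (hμ : MemLp X 2 μ) (hν : MemLp X 2 ν)
    (lam : ℝ) (hlam : 0 ≤ lam)
    (VPE : Measure Ω → ℝ)
    (hVPE : ∀ κ : Measure Ω, VPE κ = (∫ ω, X ω ∂κ) - lam * variance X κ) :
    ∀ p : ℝ, p ∈ Set.Icc (0 : ℝ) 1 →
      VPE (ENNReal.ofReal p • μ + ENNReal.ofReal (1 - p) • ν)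
        = p * VPE μ + (1 - p) * VPE ν
          - lam * p * (1 - p) * (∫ ω, X ω ∂μ - ∫ ω, X ω ∂ν) ^ 2 ∧
      VPE (ENNReal.ofReal p • μ + ENNReal.ofReal (1 - p) • ν) ≤ max (VPE μ) (VPE ν) := by
  intro p hp
  obtain ⟨hp0, hp1⟩ := hp
  have hq0 : (0:ℝ) ≤ 1 - p := by linarith
  set κ : Measure Ω := ENNReal.ofReal p • μ + ENNReal.ofReal (1 - p) • ν with hκ
  haveI : IsProbabilityMeasure κ := by
    constructor
    simp only [hκ, Measure.add_apply, Measure.smul_apply, smul_eq_mul,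
      measure_univ, mul_one]
    rw [← ENNReal.ofReal_add hp0 hq0]
    norm_num
  -- integral over the mixture
  have hint : ∀ f : Ω → ℝ, Integrable f μ → Integrable f ν →
      ∫ ω, f ω ∂κ = p * ∫ ω, f ω ∂μ + (1 - p) * ∫ ω, f ω ∂ν := by
    intro f hfμ hfν
    rw [hκ, integral_add_measure (hfμ.smul_measure ENNReal.ofReal_ne_top)
      (hfν.smul_measure ENNReal.ofReal_ne_top),
      integral_smul_measure, integral_smul_measure,
      ENNReal.toReal_ofReal hp0, ENNReal.toReal_ofReal hq0, smul_eq_mul, smul_eq_mul]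
  have hXμ : Integrable X μ := hμ.integrable one_le_two
  have hXν : Integrable X ν := hν.integrable one_le_two
  have hX2μ : Integrable (fun ω => X ω ^ 2) μ :=
    (memLp_two_iff_integrable_sq hμ.aestronglyMeasurable).mp hμ
  have hX2ν : Integrable (fun ω => X ω ^ 2) ν :=
    (memLp_two_iff_integrable_sq hν.aestronglyMeasurable).mp hν
  have hκℒp : MemLp X 2 κ := by
    rw [memLp_two_iff_integrable_sq hX.aestronglyMeasurable]
    exact (hX2μ.smul_measure ENNReal.ofReal_ne_top).add_measure
      (hX2ν.smul_measure ENNReal.ofReal_ne_top)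
  have hE : ∫ ω, X ω ∂κ = p * ∫ ω, X ω ∂μ + (1 - p) * ∫ ω, X ω ∂ν := hint X hXμ hXν
  have hE2 : ∫ ω, X ω ^ 2 ∂κ = p * ∫ ω, X ω ^ 2 ∂μ + (1 - p) * ∫ ω, X ω ^ 2 ∂ν :=
    hint (fun ω => X ω ^ 2) hX2μ hX2ν
  have hVκ : variance X κ = ∫ ω, X ω ^ 2 ∂κ - (∫ ω, X ω ∂κ) ^ 2 := by
    simpa using variance_eq_sub hκℒp
  have hVμ : variance X μ = ∫ ω, X ω ^ 2 ∂μ - (∫ ω, X ω ∂μ) ^ 2 := by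
    simpa using variance_eq_sub hμ
  have hVν : variance X ν = ∫ ω, X ω ^ 2 ∂ν - (∫ ω, X ω ∂ν) ^ 2 := by
    simpa using variance_eq_sub hν
  have key : VPE κ = p * VPE μ + (1 - p) * VPE ν
      - lam * p * (1 - p) * (∫ ω, X ω ∂μ - ∫ ω, X ω ∂ν) ^ 2 := by
    rw [hVPE κ, hVPE μ, hVPE ν, hVκ, hVμ, hVν, hE, hE2]
    ring
  refine ⟨key, ?_⟩
  have hsub : lam * p * (1 - p) * (∫ ω, X ω ∂μ - ∫ ω, X ω ∂ν) ^ 2 ≥ 0 := by positivity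
  have hle : p * VPE μ + (1 - p) * VPE ν ≤ max (VPE μ) (VPE ν) := by
    have h1 : VPE μ ≤ max (VPE μ) (VPE ν) := le_max_left _ _
    have h2 : VPE ν ≤ max (VPE μ) (VPE ν) := le_max_right _ _
    nlinarith
  linarith [key]
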